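/- Let U ⊆ S^m_d be a quasi-stable monomial module and G a P(U)-marked set. Then the reduction relation →_G is Noetherian (there is no infinite chain of reduction steps) and confluent; in particular every homogeneous element reduces to a unique element of ⟨N(U)⟩^A. -/

import Mathlib

open MvPolynomial

namespace MB

/-- Exponent (multi-index) of a term in the variables `x_0, …, x_n`. -/
abbrev Exp (n : ℕ) := Fin (n+1) →₀ ℕ

variable {n : ℕ}

/-- Total degree of a term. -/
def degE (α : Exp n) : ℕ := α.sum fun _ e => e

/-- `x_i` is a multiplicative variable for the term `x^α`, i.e. `x_i ≤ min(x^α)`. -/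
def mult (α : Exp n) (i : Fin (n+1)) : Prop := ∀ j ∈ α.support, i ≤ j

/-- Every variable occurring in `x^δ` is multiplicative for `x^α`. -/
def multExp (α δ : Exp n) : Prop := ∀ i ∈ δ.support, mult α i

/-- Pommaret cone of a term. -/
def pommaretCone (α : Exp n) : Set (Exp n) := {γ | ∃ δ, multExp α δ ∧ γ = α + δ}

/-- A set of terms is (the set of terms of) a monomial ideal. -/
def IsMonomialIdeal (T : Set (Exp n)) : Prop := ∀ α ∈ T, ∀ β, α + β ∈ T

/-- `P` is a Pommaret basis of the set of terms `T`: the terms of `T` are the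
disjoint union of the Pommaret cones of the elements of `P`. -/
def IsPommaretBasis (P : Finset (Exp n)) (T : Set (Exp n)) : Prop :=
  (∀ γ, γ ∈ T ↔ ∃ α ∈ P, γ ∈ pommaretCone α) ∧
  ∀ γ : Exp n, ∀ α ∈ P, ∀ β ∈ P, γ ∈ pommaretCone α → γ ∈ pommaretCone β → α = β

/-- Lexicographic order on terms (with `x_n > … > x_0` significance). -/
def lexLt (η δ : Exp n) : Prop := ∃ i, η i < δ i ∧ ∀ j, i < j → η j = δ j

/-- Terms of the saturation `(J : (x_0,…,x_n)^∞)` of a monomial ideal. -/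
def satTerms (T : Set (Exp n)) : Set (Exp n) :=
  {α | ∃ j : ℕ, ∀ β : Exp n, degE β = j → α + β ∈ T}

section ModuleDefs

variable (A : Type*) [CommRing A] {κ : Type*} [Fintype κ] [DecidableEq κ]

/-- The term `x^α e_k` of the free module. -/
noncomputable def termV (α : Exp n) (k : κ) : κ → MvPolynomial (Fin (n+1)) A :=
  Pi.single k (monomial α 1)

variable {A}

/-- Homogeneity of degree `s` in `S^m_d` (with weight vector `d`). -/
def IsHomogV (d : κ → ℤ) (f : κ → MvPolynomial (Fin (n+1)) A) (s : ℤ) : Prop :=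
  ∀ k, ∀ β ∈ (f k).support, (degE β : ℤ) + d k = s

variable (A)

/-- The degree-`s` component `(S^m_d)_s` as an `A`-submodule. -/
noncomputable def homogCompV (d : κ → ℤ) (s : ℤ) :
    Submodule A (κ → MvPolynomial (Fin (n+1)) A) where
  carrier := {f | IsHomogV d f s}
  add_mem' := by
    intro f g hf hg k β hβ
    rcases Finset.mem_union.mp (MvPolynomial.support_add hβ) with h | h
    · exact hf k β h
    · exact hg k β h
  zero_mem' := by intro k β hβ; simp at hβ
  smul_mem' := by
    intro a f hf k β hβ
    exact hf k β (MvPolynomial.support_smul hβ)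

/-- The set `N(U)` of terms of `S^m_d` not belonging to the monomial module `U = ⊕ J^(k) e_k`. -/
def NUTerms (J : κ → Set (Exp n)) : Set (κ → MvPolynomial (Fin (n+1)) A) :=
  {v | ∃ k, ∃ α, α ∉ J k ∧ v = termV A α k}

/-- The degree-`s` part `N(U)_s`. -/
def NUTermsDeg (d : κ → ℤ) (J : κ → Set (Exp n)) (s : ℤ) :
    Set (κ → MvPolynomial (Fin (n+1)) A) :=
  {v | ∃ k, ∃ α, α ∉ J k ∧ (degE α : ℤ) + d k = s ∧ v = termV A α k}

variable {A}

/-- A `P(U)`-marked set: for each `x^α e_k` with `α ∈ P k`, the element `g α k` has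
head term `x^α e_k` (coefficient `1`) and all other terms in `N(U)` of the same degree. -/
def IsMarkedSetV (d : κ → ℤ) (J : κ → Set (Exp n)) (P : κ → Finset (Exp n))
    (g : Exp n → κ → (κ → MvPolynomial (Fin (n+1)) A)) : Prop :=
  ∀ k, ∀ α ∈ P k, ∀ l, ∀ β ∈ ((g α k - termV A α k) l).support,
    β ∉ J l ∧ (degE β : ℤ) + d l = (degE α : ℤ) + d k

/-- The underlying set of elements of the marked set `G`. -/
def GSet (P : κ → Finset (Exp n)) (g : Exp n → κ → (κ → MvPolynomial (Fin (n+1)) A)) :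
    Set (κ → MvPolynomial (Fin (n+1)) A) :=
  {v | ∃ k, ∃ α ∈ P k, v = g α k}

/-- The set `G^(s)` of multiplicative multiples of elements of `G` of degree `s`. -/
def GSdeg (d : κ → ℤ) (P : κ → Finset (Exp n))
    (g : Exp n → κ → (κ → MvPolynomial (Fin (n+1)) A)) (s : ℤ) :
    Set (κ → MvPolynomial (Fin (n+1)) A) :=
  {v | ∃ k, ∃ α ∈ P k, ∃ δ : Exp n, multExp α δ ∧
    (degE δ : ℤ) + (degE α : ℤ) + d k = s ∧ v = (monomial δ (1:A)) • g α k}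

/-- The `S`-submodule `⟨G⟩` generated by the marked set. -/
noncomputable def GmodS (P : κ → Finset (Exp n))
    (g : Exp n → κ → (κ → MvPolynomial (Fin (n+1)) A)) :
    Submodule (MvPolynomial (Fin (n+1)) A) (κ → MvPolynomial (Fin (n+1)) A) :=
  Submodule.span _ (GSet P g)

/-- The degree-`s` component `⟨G⟩_s` as an `A`-submodule. -/
noncomputable def GmodDeg (d : κ → ℤ) (P : κ → Finset (Exp n))
    (g : Exp n → κ → (κ → MvPolynomial (Fin (n+1)) A)) (s : ℤ) :
    Submodule A (κ → MvPolynomial (Fin (n+1)) A) :=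
  (GmodS P g).restrictScalars A ⊓ homogCompV A d s

/-- `G` is a marked basis: `(S^m_d)_s = ⟨G⟩_s ⊕ ⟨N(U)_s⟩^A` for every degree `s`. -/
def MarkedBasisProp (d : κ → ℤ) (J : κ → Set (Exp n)) (P : κ → Finset (Exp n))
    (g : Exp n → κ → (κ → MvPolynomial (Fin (n+1)) A)) : Prop :=
  ∀ s : ℤ,
    homogCompV A d s = GmodDeg d P g s ⊔ Submodule.span A (NUTermsDeg A d J s) ∧
    GmodDeg d P g s ⊓ Submodule.span A (NUTermsDeg A d J s) = ⊥

/-- One step of the reduction relation `→_G`. -/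
def RedStep (P : κ → Finset (Exp n)) (g : Exp n → κ → (κ → MvPolynomial (Fin (n+1)) A))
    (h h' : κ → MvPolynomial (Fin (n+1)) A) : Prop :=
  ∃ k, ∃ α ∈ P k, ∃ η : Exp n, multExp α η ∧
    (h k).coeff (η + α) ≠ 0 ∧
    h' = h - ((h k).coeff (η + α)) • ((monomial η (1:A)) • g α k)

end ModuleDefs

section IdealDefs

variable {A : Type*} [CommRing A]

/-- A `P(J)`-marked set of polynomials. -/
def IsMarkedSetI (T : Set (Exp n)) (P : Finset (Exp n))
    (g : Exp n → MvPolynomial (Fin (n+1)) A) : Prop :=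
  ∀ α ∈ P, ∀ β ∈ (g α - monomial α (1:A)).support, β ∉ T ∧ degE β = degE α

variable (A)

/-- The degree-`s` monomials not in `T`. -/
def NTermsDegI (T : Set (Exp n)) (s : ℕ) : Set (MvPolynomial (Fin (n+1)) A) :=
  {p | ∃ β, β ∉ T ∧ degE β = s ∧ p = monomial β (1:A)}

variable {A}

/-- Degree-`s` part of the ideal generated by the marked set. -/
noncomputable def IdealDegI (P : Finset (Exp n)) (g : Exp n → MvPolynomial (Fin (n+1)) A)
    (s : ℕ) : Submodule A (MvPolynomial (Fin (n+1)) A) :=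
  (Ideal.span (g '' ↑P)).restrictScalars A ⊓ homogeneousSubmodule (Fin (n+1)) A s

/-- A `P(J)`-marked basis of polynomials: `S_s = (G)_s ⊕ ⟨N(J)_s⟩^A` for all `s`. -/
def IsMarkedBasisI (T : Set (Exp n)) (P : Finset (Exp n))
    (g : Exp n → MvPolynomial (Fin (n+1)) A) : Prop :=
  IsMarkedSetI T P g ∧ ∀ s : ℕ,
    homogeneousSubmodule (Fin (n+1)) A s
      = IdealDegI P g s ⊔ Submodule.span A (NTermsDegI A T s) ∧
    IdealDegI P g s ⊓ Submodule.span A (NTermsDegI A T s) = ⊥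

/-- The polynomial `p` involves only multiplicative variables of `x^α`. -/
def multPoly (α : Exp n) (p : MvPolynomial (Fin (n+1)) A) : Prop :=
  ∀ β ∈ p.support, multExp α β

end IdealDefs

section SyzDefs

variable {A : Type*} [CommRing A]

/-- The map `(c_l) ↦ Σ_l c_l f_{α(l)}` whose kernel is `Syz(G)`. -/
noncomputable def syzMap (P : Finset (Exp n)) (g : Exp n → MvPolynomial (Fin (n+1)) A) :
    (↥P → MvPolynomial (Fin (n+1)) A) →ₗ[MvPolynomial (Fin (n+1)) A]
      MvPolynomial (Fin (n+1)) A where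
  toFun c := ∑ l : ↥P, c l * g l.1
  map_add' c c' := by simp [add_mul, Finset.sum_add_distrib]
  map_smul' a c := by simp [Finset.mul_sum, mul_assoc]

/-- Weight vector for the syzygy module: `d_l = deg x^{α(l)}`. -/
def ddeg (P : Finset (Exp n)) : ↥P → ℤ := fun l => (degE l.1 : ℤ)

/-- Terms of the monomial ideal generated by the nonmultiplicative variables of `x^{α(l)}`. -/
def Jsyz (P : Finset (Exp n)) : ↥P → Set (Exp n) :=
  fun l => {β | ∃ i ∈ β.support, ¬ mult (l : Exp n) i}

open Classical in
/-- The claimed Pommaret basis `{x_i e_l : x_i nonmultiplicative for x^{α(l)}}`. -/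
noncomputable def Psyz (P : Finset (Exp n)) : ↥P → Finset (Exp n) := fun l =>
  (Finset.univ.filter fun i : Fin (n+1) => ¬ mult (l : Exp n) i).image
    fun i => Finsupp.single i 1

open Classical in
/-- The syzygy `S_{k;i} = x_i e_k − Σ_l P_l^{k;i} e_l`. -/
noncomputable def Ssyz (P : Finset (Exp n))
    (Pc : ↥P → Fin (n+1) → ↥P → MvPolynomial (Fin (n+1)) A)
    (k : ↥P) (i : Fin (n+1)) : ↥P → MvPolynomial (Fin (n+1)) A :=
  fun l => (if l = k then (X i : MvPolynomial (Fin (n+1)) A) else 0) - Pc k i l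

/-- The set `G_Syz^(s)`. -/
def GSyzDeg (P : Finset (Exp n))
    (Pc : ↥P → Fin (n+1) → ↥P → MvPolynomial (Fin (n+1)) A) (s : ℤ) :
    Set (↥P → MvPolynomial (Fin (n+1)) A) :=
  {v | ∃ k : ↥P, ∃ i : Fin (n+1), ¬ mult (k : Exp n) i ∧ ∃ δ : Exp n,
    (∀ j ∈ δ.support, j ≤ i) ∧ (degE δ : ℤ) + 1 + ddeg P k = s ∧
    v = (monomial δ (1:A)) • Ssyz P Pc k i}

end SyzDefs


/-! ### Auxiliary material for the proof of `statement2` -/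

section AuxComb

variable {n : ℕ}

lemma lexLt_total {η δ : Exp n} (h : η ≠ δ) : lexLt η δ ∨ lexLt δ η := by
  classical
  have hne : ∃ i, η i ≠ δ i := by
    by_contra hc; push_neg at hc; exact h (Finsupp.ext hc)
  set S := (Finset.univ : Finset (Fin (n+1))).filter (fun i => η i ≠ δ i) with hS
  have hSne : S.Nonempty := hne.imp fun i hi => Finset.mem_filter.mpr ⟨Finset.mem_univ _, hi⟩
  set i := S.max' hSne with hi
  have hiS : i ∈ S := S.max'_mem hSne
  have hieq : ∀ j, i < j → η j = δ j := by
    intro j hj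
    by_contra hne'
    have : j ∈ S := Finset.mem_filter.mpr ⟨Finset.mem_univ _, hne'⟩
    exact absurd (S.le_max' j this) (not_le.mpr hj)
  have hneq : η i ≠ δ i := (Finset.mem_filter.mp hiS).2
  rcases lt_or_gt_of_ne hneq with hlt | hgt
  · exact Or.inl ⟨i, hlt, hieq⟩
  · exact Or.inr ⟨i, hgt, fun j hj => (hieq j hj).symm⟩

/-- Base-`(D+1)` encoding of a bounded exponent. -/
def code (D : ℕ) (γ : Exp n) : ℕ := ∑ i : Fin (n+1), γ i * (D+1)^(i:ℕ)

lemma geom_two (D r : ℕ) : (∑ i ∈ Finset.range r, D * (D+1)^i) + 1 = (D+1)^r := by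
  induction r with
  | zero => simp
  | succ r ih =>
    rw [Finset.sum_range_succ, pow_succ]
    have h2 : (D+1)^r * (D+1) = D * (D+1)^r + (D+1)^r := by ring
    omega

lemma code_split {D : ℕ} (i : Fin (n+1)) (γ : Exp n) :
    code D γ = (∑ j ∈ Finset.univ.filter (· < i), γ j * (D+1)^(j:ℕ))
      + γ i * (D+1)^(i:ℕ)
      + ∑ j ∈ Finset.univ.filter (i < ·), γ j * (D+1)^(j:ℕ) := by
  classical
  have h1 := Finset.sum_filter_add_sum_filter_not (Finset.univ : Finset (Fin (n+1)))
    (· < i) (fun j => γ j * (D+1)^(j:ℕ))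
  have h2 : Finset.univ.filter (fun j => ¬ j < i)
      = insert i (Finset.univ.filter (i < ·)) := by
    ext j
    simp only [Finset.mem_filter, Finset.mem_univ, true_and, Finset.mem_insert, not_lt]
    constructor
    · intro hj
      rcases eq_or_lt_of_le hj with h | h
      · exact Or.inl h.symm
      · exact Or.inr h
    · rintro (rfl | hj)
      · exact le_refl _
      · exact le_of_lt hj
  have h3 : i ∉ Finset.univ.filter (i < ·) := by simp
  rw [code, ← h1, h2, Finset.sum_insert h3]
  ring

lemma sum_lt_filter {D : ℕ} (i : Fin (n+1)) {γ : Exp n} (hγ : ∀ j, γ j ≤ D) :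
    (∑ j ∈ Finset.univ.filter (· < i), γ j * (D+1)^(j:ℕ)) < (D+1)^(i:ℕ) := by
  classical
  have hle : (∑ j ∈ Finset.univ.filter (· < i), γ j * (D+1)^(j:ℕ))
      ≤ ∑ j ∈ Finset.univ.filter (· < i), D * (D+1)^(j:ℕ) :=
    Finset.sum_le_sum fun j _ => Nat.mul_le_mul_right _ (hγ j)
  have him : (Finset.univ.filter (· < i)).image (fun j : Fin (n+1) => (j:ℕ))
      = Finset.range (i:ℕ) := by
    ext t
    simp only [Finset.mem_image, Finset.mem_filter, Finset.mem_univ, true_and,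
      Finset.mem_range]
    constructor
    · rintro ⟨j, hj, rfl⟩; exact hj
    · intro ht
      exact ⟨⟨t, lt_trans ht i.isLt⟩, by simpa [Fin.lt_def] using ht, rfl⟩
  have heq : (∑ j ∈ Finset.univ.filter (· < i), D * (D+1)^(j:ℕ))
      = ∑ t ∈ Finset.range (i:ℕ), D * (D+1)^t := by
    rw [← him, Finset.sum_image]
    intro a _ b _ hab
    exact Fin.ext hab
  have := geom_two D (i:ℕ)
  omega

lemma code_lt_of_lexLt {D : ℕ} {η δ : Exp n} (hη : ∀ i, η i ≤ D) (h : lexLt η δ) :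
    code D η < code D δ := by
  obtain ⟨i, hlt, heq⟩ := h
  rw [code_split i η, code_split i δ]
  have h3 : ∑ j ∈ Finset.univ.filter (i < ·), η j * (D+1)^(j:ℕ)
      = ∑ j ∈ Finset.univ.filter (i < ·), δ j * (D+1)^(j:ℕ) := by
    apply Finset.sum_congr rfl
    intro j hj
    rw [heq j (Finset.mem_filter.mp hj).2]
  rw [h3]
  have h4 := sum_lt_filter (D := D) i hη
  have h5 : η i * (D+1)^(i:ℕ) + (D+1)^(i:ℕ) ≤ δ i * (D+1)^(i:ℕ) := by
    have : (η i + 1) * (D+1)^(i:ℕ) ≤ δ i * (D+1)^(i:ℕ) :=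
      Nat.mul_le_mul_right _ hlt
    linarith [this]
  have h6 : (0:ℕ) ≤ ∑ j ∈ Finset.univ.filter (· < i), δ j * (D+1)^(j:ℕ) := Nat.zero_le _
  omega

lemma code_lt_pow {D : ℕ} {γ : Exp n} (hγ : ∀ i, γ i ≤ D) : code D γ < (D+1)^(n+1) := by
  classical
  have : code D γ ≤ ∑ i : Fin (n+1), D * (D+1)^(i:ℕ) :=
    Finset.sum_le_sum fun i _ => Nat.mul_le_mul_right _ (hγ i)
  have heq : (∑ i : Fin (n+1), D * (D+1)^(i:ℕ)) = ∑ t ∈ Finset.range (n+1), D * (D+1)^t := by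
    rw [Fin.sum_univ_eq_sum_range (fun t => D * (D+1)^t)]
  have := geom_two D (n+1)
  omega

lemma code_inj {D : ℕ} {η δ : Exp n} (hη : ∀ i, η i ≤ D) (hδ : ∀ i, δ i ≤ D)
    (h : code D η = code D δ) : η = δ := by
  by_contra hne
  rcases lexLt_total hne with hl | hl
  · exact absurd h (Nat.ne_of_lt (code_lt_of_lexLt hη hl))
  · exact absurd h.symm (Nat.ne_of_lt (code_lt_of_lexLt hδ hl))

lemma multExp_zero (α : Exp n) : multExp α 0 := by
  intro i hi
  simp at hi

lemma basis_mem_cone {P : Finset (Exp n)} {T : Set (Exp n)} (hB : IsPommaretBasis P T)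
    {α : Exp n} (hα : α ∈ P) {δ : Exp n} (hδ : multExp α δ) : α + δ ∈ T :=
  (hB.1 _).mpr ⟨α, hα, δ, hδ, rfl⟩

lemma basis_mem {P : Finset (Exp n)} {T : Set (Exp n)} (hB : IsPommaretBasis P T)
    {α : Exp n} (hα : α ∈ P) : α ∈ T := by
  have := basis_mem_cone hB hα (multExp_zero α)
  simpa using this

lemma decomp_unique {P : Finset (Exp n)} {T : Set (Exp n)} (hB : IsPommaretBasis P T)
    {α δ α' δ' : Exp n} (hα : α ∈ P) (hδ : multExp α δ) (hα' : α' ∈ P) (hδ' : multExp α' δ')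
    (h : α + δ = α' + δ') : α = α' ∧ δ = δ' := by
  have hαα : α = α' := hB.2 (α + δ) α hα α' hα' ⟨δ, hδ, rfl⟩ ⟨δ', hδ', h⟩
  subst hαα
  exact ⟨rfl, add_left_cancel h⟩

/-- Key lemma: a multiple of a term outside `T` landing in `T` has a lexicographically
smaller cone offset. -/
lemma keyLex {T : Set (Exp n)} (hI : IsMonomialIdeal T) {P : Finset (Exp n)}
    (hB : IsPommaretBasis P T) {β η α' δ' : Exp n} (hβ : β ∉ T) (hα' : α' ∈ P)
    (hδ' : multExp α' δ') (h : η + β = α' + δ') : lexLt δ' η := by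
  have hne : δ' ≠ η := by
    rintro rfl
    apply hβ
    have hba : β = α' := by
      ext j
      have hcoord := congrArg (fun f : Exp n => f j) h
      simp at hcoord
      omega
    rw [hba]
    exact basis_mem hB hα'
  rcases lexLt_total hne with hl | hl
  · exact hl
  exfalso
  obtain ⟨i, hlt, heq⟩ := hl
  have hile : α' ≤ β := by
    rw [Finsupp.le_def]
    intro j
    have hcoord : η j + β j = α' j + δ' j := by
      have := congrArg (fun f : Exp n => f j) h
      simpa using this
    rcases lt_trichotomy j i with hji | hji | hji
    · have hiδ : i ∈ δ'.support := by
        rw [Finsupp.mem_support_iff]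
        omega
      have hmult : mult α' i := hδ' i hiδ
      have : α' j = 0 := by
        by_contra haj
        have : j ∈ α'.support := Finsupp.mem_support_iff.mpr haj
        exact absurd (hmult j this) (not_le.mpr hji)
      omega
    · subst hji; omega
    · have := heq j hji; omega
  apply hβ
  have : α' + (β - α') = β := add_tsub_cancel_of_le hile
  rw [← this]
  exact hI α' (basis_mem hB hα') _

open Classical in
/-- The (chosen) Pommaret generator of a term of the ideal. -/
noncomputable def alphaPart (P : Finset (Exp n)) (γ : Exp n) : Exp n :=
  if h : ∃ α ∈ P, γ ∈ pommaretCone α then h.choose else 0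

/-- The cone offset of a term of the ideal. -/
noncomputable def deltaPart (P : Finset (Exp n)) (γ : Exp n) : Exp n := γ - alphaPart P γ

lemma alphaPart_spec {P : Finset (Exp n)} {T : Set (Exp n)} (hB : IsPommaretBasis P T)
    {γ : Exp n} (hγ : γ ∈ T) :
    alphaPart P γ ∈ P ∧ multExp (alphaPart P γ) (deltaPart P γ)
      ∧ γ = alphaPart P γ + deltaPart P γ := by
  have hex : ∃ α ∈ P, γ ∈ pommaretCone α := (hB.1 γ).mp hγ
  obtain ⟨hP, δ, hm, hsum⟩ := hex.choose_spec
  have ha : alphaPart P γ = hex.choose := dif_pos hex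
  have hd : deltaPart P γ = δ := by
    show γ - alphaPart P γ = δ
    rw [ha]
    ext j
    rw [Finsupp.tsub_apply]
    have hj := congrArg (fun f : Exp n => f j) hsum
    simp only [Finsupp.coe_add, Pi.add_apply] at hj
    omega
  rw [ha, hd]
  exact ⟨hP, hm, hsum⟩

lemma decomp_eq {P : Finset (Exp n)} {T : Set (Exp n)} (hB : IsPommaretBasis P T)
    {γ : Exp n} (hγ : γ ∈ T) {α δ : Exp n} (hα : α ∈ P) (hδ : multExp α δ)
    (h : γ = α + δ) : α = alphaPart P γ ∧ δ = deltaPart P γ := by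
  obtain ⟨h1, h2, h3⟩ := alphaPart_spec hB hγ
  exact decomp_unique hB hα hδ h1 h2 (h.symm.trans h3)

lemma degE_add (α β : Exp n) : degE (α + β) = degE α + degE β := by
  classical
  simp [degE, Finsupp.sum_add_index']

lemma coord_le_degE (α : Exp n) (i : Fin (n+1)) : α i ≤ degE α := by
  classical
  by_cases h : α i = 0
  · simp [h]
  · have hi : i ∈ α.support := Finsupp.mem_support_iff.mpr h
    exact Finset.single_le_sum (f := fun j => α j) (fun j _ => Nat.zero_le _) hi

/-- Generic strict-decrease lemma for sums of powers of two over finsets with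
an injective rank, when one element of maximal relevance disappears and only
lower-rank elements change. -/
lemma sum_two_pow_lt {X : Type*} [DecidableEq X] {Afs Bfs : Finset X} {r : X → ℕ} {t : X}
    (hinj : ∀ x ∈ Afs ∪ Bfs, ∀ y ∈ Afs ∪ Bfs, r x = r y → x = y)
    (htA : t ∈ Afs) (htB : t ∉ Bfs)
    (hhigh : ∀ x ∈ Afs ∪ Bfs, r t < r x → (x ∈ Afs ↔ x ∈ Bfs)) :
    ∑ x ∈ Bfs, 2^(r x) < ∑ x ∈ Afs, 2^(r x) := by
  classical
  have hsplitA := Finset.sum_filter_add_sum_filter_not Afs (fun x => r t < r x)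
    (fun x => 2^(r x))
  have hsplitB := Finset.sum_filter_add_sum_filter_not Bfs (fun x => r t < r x)
    (fun x => 2^(r x))
  have hfeq : Bfs.filter (fun x => r t < r x) = Afs.filter (fun x => r t < r x) := by
    ext x
    simp only [Finset.mem_filter]
    constructor
    · rintro ⟨hx, hr⟩
      exact ⟨(hhigh x (Finset.mem_union.mpr (Or.inr hx)) hr).mpr hx, hr⟩
    · rintro ⟨hx, hr⟩
      exact ⟨(hhigh x (Finset.mem_union.mpr (Or.inl hx)) hr).mp hx, hr⟩
  -- the low part of B is < 2^(r t)
  have hlowB : ∑ x ∈ Bfs.filter (fun x => ¬ r t < r x), 2^(r x) < 2^(r t) := by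
    have hrlt : ∀ x ∈ Bfs.filter (fun x => ¬ r t < r x), r x < r t := by
      intro x hx
      obtain ⟨hxB, hxr⟩ := Finset.mem_filter.mp hx
      rcases lt_or_eq_of_le (not_lt.mp hxr) with h | h
      · exact h
      · exfalso
        have : x = t := hinj x (Finset.mem_union.mpr (Or.inr hxB)) t
          (Finset.mem_union.mpr (Or.inl htA)) h
        exact htB (this ▸ hxB)
    have hinjS : ∀ x ∈ Bfs.filter (fun x => ¬ r t < r x),
        ∀ y ∈ Bfs.filter (fun x => ¬ r t < r x), r x = r y → x = y := by
      intro x hx y hy hxy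
      exact hinj x (Finset.mem_union.mpr (Or.inr (Finset.mem_filter.mp hx).1)) y
        (Finset.mem_union.mpr (Or.inr (Finset.mem_filter.mp hy).1)) hxy
    have himg : (∑ i ∈ (Bfs.filter (fun x => ¬ r t < r x)).image r, 2^i)
        = ∑ x ∈ Bfs.filter (fun x => ¬ r t < r x), 2^(r x) :=
      Finset.sum_image (f := fun i : ℕ => (2:ℕ)^i) (g := r) hinjS
    rw [← himg]
    have hsub : (Bfs.filter (fun x => ¬ r t < r x)).image r ⊆ Finset.range (r t) := by
      intro i hi
      obtain ⟨x, hx, rfl⟩ := Finset.mem_image.mp hi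
      exact Finset.mem_range.mpr (hrlt x hx)
    calc ∑ i ∈ (Bfs.filter (fun x => ¬ r t < r x)).image r, 2^i
        ≤ ∑ i ∈ Finset.range (r t), 2^i :=
          Finset.sum_le_sum_of_subset hsub
      _ < 2^(r t) := by
          have := geom_two 1 (r t)
          simp only [Nat.reduceAdd, one_mul] at this
          omega
  have hlowA : 2^(r t) ≤ ∑ x ∈ Afs.filter (fun x => ¬ r t < r x), 2^(r x) := by
    apply Finset.single_le_sum (f := fun x => 2^(r x)) (fun x _ => Nat.zero_le _)
    exact Finset.mem_filter.mpr ⟨htA, lt_irrefl _⟩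
  rw [hfeq] at hsplitB
  omega

lemma split_eq {N a a' b b' : ℕ} (hb : b < N) (hb' : b' < N)
    (h : a * N + b = a' * N + b') : a = a' ∧ b = b' := by
  have hN : 0 < N := lt_of_le_of_lt (Nat.zero_le _) hb
  have h1 : (a * N + b) % N = b := by
    rw [Nat.add_comm, Nat.mul_comm, Nat.add_mul_mod_self_left]
    exact Nat.mod_eq_of_lt hb
  have h2 : (a' * N + b') % N = b' := by
    rw [Nat.add_comm, Nat.mul_comm, Nat.add_mul_mod_self_left]
    exact Nat.mod_eq_of_lt hb'
  have hbb : b = b' := by rw [← h1, ← h2, h]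
  refine ⟨?_, hbb⟩
  have : a * N = a' * N := by omega
  exact Nat.eq_of_mul_eq_mul_right hN this

end AuxComb

section AuxMod

variable {n : ℕ} {κ : Type*} [Fintype κ] [DecidableEq κ]
variable {A : Type*} [CommRing A]
variable {d : κ → ℤ} {J : κ → Set (Exp n)} {P : κ → Finset (Exp n)}
variable {gb : Exp n → κ → (κ → MvPolynomial (Fin (n+1)) A)}

lemma termV_apply (α : Exp n) (k l : κ) :
    termV A α k l = if l = k then monomial α (1:A) else 0 := by
  rw [termV]
  by_cases h : l = k
  · subst h; simp
  · rw [Pi.single_eq_of_ne h]; simp [h]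

/-- Decomposition of a coefficient of a marked polynomial into head and tail parts. -/
lemma gb_coeff (hG : IsMarkedSetV d J P gb) {k : κ} {α : Exp n} (hα : α ∈ P k) (l : κ)
    (γ : Exp n) :
    coeff γ (gb α k l)
      = (if l = k ∧ γ = α then (1:A) else 0) + coeff γ ((gb α k - termV A α k) l) := by
  have h1 : gb α k l = termV A α k l + (gb α k - termV A α k) l := by
    simp
  rw [h1, coeff_add]
  congr 1
  rw [termV_apply]
  by_cases h : l = k
  · subst h
    simp only [if_true, true_and]
    rw [coeff_monomial]
    by_cases h2 : γ = α
    · subst h2; simp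
    · simp [h2, Ne.symm h2]
  · simp [h]

/-- On terms of `U`, a marked polynomial has only its head coefficient. -/
lemma gb_coeff_J (hG : IsMarkedSetV d J P gb) {k : κ} {α : Exp n} (hα : α ∈ P k) {l : κ}
    {γ : Exp n} (hγ : γ ∈ J l) :
    coeff γ (gb α k l) = if l = k ∧ γ = α then (1:A) else 0 := by
  rw [gb_coeff hG hα]
  have : coeff γ ((gb α k - termV A α k) l) = 0 := by
    by_contra hc
    exact (hG k α hα l γ (mem_support_iff.mpr hc)).1 hγ
  rw [this, add_zero]

/-- Any term of a marked polynomial is either its head or lies in `N(U)` with matching degree. -/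
lemma gb_coeff_cases (hG : IsMarkedSetV d J P gb) {k : κ} {α : Exp n} (hα : α ∈ P k) {l : κ}
    {γ : Exp n} (h : coeff γ (gb α k l) ≠ 0) :
    (l = k ∧ γ = α) ∨ (γ ∉ J l ∧ (degE γ : ℤ) + d l = (degE α : ℤ) + d k) := by
  by_cases hh : l = k ∧ γ = α
  · exact Or.inl hh
  · right
    rw [gb_coeff hG hα, if_neg hh, zero_add] at h
    exact hG k α hα l γ (mem_support_iff.mpr h)

lemma homog_coeff {h : κ → MvPolynomial (Fin (n+1)) A} {s : ℤ} (hh : IsHomogV d h s) {l : κ}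
    {γ : Exp n} (hc : coeff γ (h l) ≠ 0) : (degE γ : ℤ) + d l = s :=
  hh l γ (mem_support_iff.mpr hc)

/-- A multiplicative multiple of a marked polynomial is homogeneous. -/
lemma smul_gb_homog (hG : IsMarkedSetV d J P gb) {k : κ} {α : Exp n} (hα : α ∈ P k)
    (η : Exp n) :
    IsHomogV d ((monomial η (1:A)) • gb α k) ((degE η : ℤ) + (degE α : ℤ) + d k) := by
  intro l β hβ
  have hβc : coeff β ((monomial η (1:A)) • gb α k l) ≠ 0 := by
    rw [← mem_support_iff]
    exact hβ
  rw [smul_eq_mul (α := MvPolynomial (Fin (n+1)) A)] at hβc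
  rw [coeff_monomial_mul'] at hβc
  by_cases hle : η ≤ β
  · rw [if_pos hle, one_mul] at hβc
    have hsum : β = η + (β - η) := (add_tsub_cancel_of_le hle).symm
    rcases gb_coeff_cases hG hα hβc with ⟨rfl, h2⟩ | ⟨_, h2⟩
    · rw [hsum, h2, degE_add]
      push_cast
      ring
    · rw [hsum, degE_add]
      push_cast
      push_cast at h2
      linarith
  · rw [if_neg hle] at hβc
    exact absurd rfl hβc

lemma RedStep_homog (hG : IsMarkedSetV d J P gb) {h h' : κ → MvPolynomial (Fin (n+1)) A}
    {s : ℤ} (hh : IsHomogV d h s) (hst : RedStep P gb h h') : IsHomogV d h' s := by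
  obtain ⟨k, α, hα, η, hmul, hne, rfl⟩ := hst
  intro l β hβ
  have hβc : coeff β ((h - (h k).coeff (η + α) • (monomial η (1:A)) • gb α k) l) ≠ 0 :=
    mem_support_iff.mp hβ
  simp only [Pi.sub_apply, Pi.smul_apply, coeff_sub] at hβc
  by_cases h1 : coeff β (h l) ≠ 0
  · exact homog_coeff hh h1
  · push_neg at h1
    rw [h1] at hβc
    have h2 : coeff β (((h k).coeff (η + α) • ((monomial η (1:A)) • gb α k)) l) ≠ 0 := by
      simpa using hβc
    have h3 : coeff β (((monomial η (1:A)) • gb α k) l) ≠ 0 := by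
      intro hzero
      apply h2
      simp only [Pi.smul_apply] at hzero ⊢
      rw [coeff_smul, hzero, smul_zero]
    have h4 := smul_gb_homog hG hα η l β (mem_support_iff.mpr h3)
    have h5 : (degE (η + α) : ℤ) + d k = s := homog_coeff hh hne
    rw [degE_add] at h5
    push_cast at h4 h5 ⊢
    linarith

open Classical in
/-- The set of terms of an element lying in the monomial module `U`. -/
noncomputable def USupp (J : κ → Set (Exp n)) (h : κ → MvPolynomial (Fin (n+1)) A) :
    Finset (κ × Exp n) :=
  Finset.univ.biUnion fun l => ((h l).support.filter fun γ => γ ∈ J l).image fun γ => (l, γ)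

lemma mem_USupp {h : κ → MvPolynomial (Fin (n+1)) A} {p : κ × Exp n} :
    p ∈ USupp J h ↔ coeff p.2 (h p.1) ≠ 0 ∧ p.2 ∈ J p.1 := by
  classical
  obtain ⟨l, γ⟩ := p
  simp only [USupp, Finset.mem_biUnion, Finset.mem_univ, true_and, Finset.mem_image,
    Finset.mem_filter, mem_support_iff]
  constructor
  · rintro ⟨l', ⟨γ', ⟨hc, hJ⟩, heq⟩⟩
    cases heq
    exact ⟨hc, hJ⟩
  · rintro ⟨hc, hJ⟩
    exact ⟨l, γ, ⟨hc, hJ⟩, rfl⟩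

open Classical in
/-- The rank function used as termination measure. -/
noncomputable def rankF (d : κ → ℤ) (P : κ → Finset (Exp n)) (s : ℤ) (p : κ × Exp n) : ℕ :=
  code (Finset.univ.sup fun k : κ => (s - d k).toNat) (deltaPart (P p.1) p.2)
      * ((((Finset.univ.sup fun k : κ => (s - d k).toNat)+1)^(n+1)) * Fintype.card κ)
    + (code (Finset.univ.sup fun k : κ => (s - d k).toNat) p.2 * Fintype.card κ
        + (Fintype.equivFin κ) p.1)

open Classical in
/-- The termination measure. -/
noncomputable def nuF (d : κ → ℤ) (J : κ → Set (Exp n)) (P : κ → Finset (Exp n)) (s : ℤ)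
    (h : κ → MvPolynomial (Fin (n+1)) A) : ℕ :=
  ∑ p ∈ USupp J h, 2^(rankF d P s p)

lemma coord_bound {h : κ → MvPolynomial (Fin (n+1)) A} {s : ℤ} (hh : IsHomogV d h s) {l : κ}
    {γ : Exp n} (hγ : coeff γ (h l) ≠ 0) (i : Fin (n+1)) :
    γ i ≤ Finset.univ.sup fun k : κ => (s - d k).toNat := by
  have h1 := homog_coeff hh hγ
  have h2 : (degE γ : ℤ) = s - d l := by linarith
  have h3 : degE γ = (s - d l).toNat := by omega
  calc γ i ≤ degE γ := coord_le_degE γ i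
    _ = (s - d l).toNat := h3
    _ ≤ _ := Finset.le_sup (f := fun k : κ => (s - d k).toNat) (Finset.mem_univ l)

lemma mul_add_lt {c E i m : ℕ} (hc : c < E) (hi : i < m) : c * m + i < E * m := by
  calc c * m + i < c * m + m := by omega
    _ = (c + 1) * m := by ring
    _ ≤ E * m := Nat.mul_le_mul_right m hc

lemma deltaPart_coord_le (P' : Finset (Exp n)) (γ : Exp n) (i : Fin (n+1)) :
    deltaPart P' γ i ≤ γ i := by
  rw [deltaPart, Finsupp.tsub_apply]
  exact Nat.sub_le _ _

lemma smul_apply_eq_mul (p : MvPolynomial (Fin (n+1)) A) (v : κ → MvPolynomial (Fin (n+1)) A)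
    (k : κ) : (p • v) k = p * v k := rfl

end AuxMod

section AuxDecrease

variable {n : ℕ} {κ : Type*} [Fintype κ] [DecidableEq κ]
variable {A : Type*} [CommRing A]
variable {d : κ → ℤ} {J : κ → Set (Exp n)} {P : κ → Finset (Exp n)}
variable {gb : Exp n → κ → (κ → MvPolynomial (Fin (n+1)) A)}

lemma nuF_lt (hQS : ∀ k, IsMonomialIdeal (J k) ∧ IsPommaretBasis (P k) (J k))
    (hG : IsMarkedSetV d J P gb) {s : ℤ} {h h' : κ → MvPolynomial (Fin (n+1)) A}
    (hh : IsHomogV d h s) (hst : RedStep P gb h h') :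
    nuF d J P s h' < nuF d J P s h := by
  classical
  have hh' : IsHomogV d h' s := RedStep_homog hG hh hst
  obtain ⟨k0, α, hα, η, hmul, hne0, hdef⟩ := hst
  set D := Finset.univ.sup (fun k : κ => (s - d k).toNat) with hD
  set E := (D+1)^(n+1) with hE
  set m := Fintype.card κ with hm
  -- coefficients of h'
  have hcoeff : ∀ l γ, coeff γ (h' l) = coeff γ (h l)
      - (h k0).coeff (η + α) * coeff γ ((monomial η (1:A)) * gb α k0 l) := by
    intro l γ
    rw [hdef]
    simp only [Pi.sub_apply, Pi.smul_apply, coeff_sub, coeff_smul, smul_eq_mul]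
  -- the reduced term
  have tJ : η + α ∈ J k0 := by
    rw [add_comm]
    exact basis_mem_cone (hQS k0).2 hα hmul
  have hαJ : α ∈ J k0 := basis_mem (hQS k0).2 hα
  have headcoeff : coeff (η + α) ((monomial η (1:A)) * gb α k0 k0) = 1 := by
    rw [coeff_monomial_mul, gb_coeff_J hG hα hαJ]
    simp
  have htB' : coeff (η + α) (h' k0) = 0 := by
    rw [hcoeff, headcoeff, mul_one, sub_self]
  -- changed coefficients have lex-smaller offsets
  have changed : ∀ l γ, coeff γ (h' l) ≠ coeff γ (h l) → ((l, γ) : κ × Exp n) ≠ (k0, η + α) →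
      γ ∈ J l → lexLt (deltaPart (P l) γ) η := by
    intro l γ hchg hneq hγJ
    have hmulc : coeff γ ((monomial η (1:A)) * gb α k0 l) ≠ 0 := by
      intro hzero
      rw [hcoeff, hzero, mul_zero, sub_zero] at hchg
      exact hchg rfl
    rw [coeff_monomial_mul'] at hmulc
    by_cases hle : η ≤ γ
    · rw [if_pos hle, one_mul] at hmulc
      have hγsum : γ = η + (γ - η) := (add_tsub_cancel_of_le hle).symm
      rcases gb_coeff_cases hG hα hmulc with ⟨rfl, h2⟩ | ⟨hβ, _⟩
      · exfalso
        apply hneq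
        rw [Prod.mk.injEq]
        exact ⟨rfl, by rw [hγsum, h2]⟩
      · obtain ⟨hPa, hma, hsa⟩ := alphaPart_spec (hQS l).2 hγJ
        exact keyLex (hQS l).1 (hQS l).2 hβ hPa hma (hγsum ▸ hsa)
    · rw [if_neg hle] at hmulc
      exact absurd rfl hmulc
  -- the offset of the reduced term is η
  have hδη : deltaPart (P k0) (η + α) = η :=
    (decomp_eq (hQS k0).2 tJ hα hmul (add_comm η α)).2.symm
  -- bounds for members
  have hbound : ∀ p ∈ USupp J h ∪ USupp J h', ∀ i, p.2 i ≤ D := by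
    intro p hp i
    rcases Finset.mem_union.mp hp with hp | hp
    · exact coord_bound hh (mem_USupp.mp hp).1 i
    · exact coord_bound hh' (mem_USupp.mp hp).1 i
  have hbound' : ∀ p : κ × Exp n, (∀ i, p.2 i ≤ D) → ∀ i, deltaPart (P p.1) p.2 i ≤ D :=
    fun p hp i => le_trans (deltaPart_coord_le _ _ i) (hp i)
  have hEpos : ∀ (γ : Exp n), (∀ i, γ i ≤ D) → code D γ < E := fun γ hγ => code_lt_pow hγ
  have hblt : ∀ p : κ × Exp n, (∀ i, p.2 i ≤ D) →
      code D p.2 * m + ((Fintype.equivFin κ) p.1 : ℕ) < E * m :=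
    fun p hp => mul_add_lt (hEpos p.2 hp) ((Fintype.equivFin κ) p.1).isLt
  have hrank : ∀ p : κ × Exp n, rankF d P s p
      = code D (deltaPart (P p.1) p.2) * (E * m)
        + (code D p.2 * m + ((Fintype.equivFin κ) p.1 : ℕ)) := by
    intro p
    rw [rankF, ← hD, ← hE, hm]
  -- apply the generic lemma
  rw [nuF, nuF]
  set t : κ × Exp n := (k0, η + α) with ht
  apply sum_two_pow_lt (t := t)
  · -- injectivity
    intro p hp q hq hpq
    have hbp := hbound p hp
    have hbq := hbound q hq
    rw [hrank, hrank] at hpq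
    obtain ⟨-, h2⟩ := split_eq (hblt p hbp) (hblt q hbq) hpq
    obtain ⟨h3, h4⟩ := split_eq ((Fintype.equivFin κ) p.1).isLt ((Fintype.equivFin κ) q.1).isLt h2
    have hγ : p.2 = q.2 := code_inj hbp hbq h3
    have hl : p.1 = q.1 := (Fintype.equivFin κ).injective (Fin.ext h4)
    exact Prod.ext hl hγ
  · -- t belongs to the old support
    exact mem_USupp.mpr ⟨hne0, tJ⟩
  · -- t does not belong to the new support
    intro hc
    exact (mem_USupp.mp hc).1 htB'
  · -- higher-rank terms are unchanged
    intro p hp hrlt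
    have hpJ : p.2 ∈ J p.1 := by
      rcases Finset.mem_union.mp hp with hp' | hp'
      · exact (mem_USupp.mp hp').2
      · exact (mem_USupp.mp hp').2
    have hceq : coeff p.2 (h' p.1) = coeff p.2 (h p.1) := by
      by_contra hchg
      have hpt : p ≠ t := by
        intro hpt
        rw [hpt] at hrlt
        exact lt_irrefl _ hrlt
      have hlex : lexLt (deltaPart (P p.1) p.2) η := by
        have := changed p.1 p.2 hchg (by rwa [ht] at hpt ⊢) hpJ
        exact this
      -- then rank p < rank t, contradiction
      have hbp := hbound p hp
      have hcode : code D (deltaPart (P p.1) p.2) < code D η :=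
        code_lt_of_lexLt (hbound' p hbp) hlex
      have hrp : rankF d P s p < rankF d P s t := by
        rw [hrank, hrank]
        have h1 : code D (deltaPart (P t.1) t.2) = code D η := by
          rw [ht, hδη]
        rw [h1]
        calc code D (deltaPart (P p.1) p.2) * (E * m)
              + (code D p.2 * m + ((Fintype.equivFin κ) p.1 : ℕ))
            < code D (deltaPart (P p.1) p.2) * (E * m) + E * m := by
              have := hblt p hbp
              omega
          _ = (code D (deltaPart (P p.1) p.2) + 1) * (E * m) := by ring
          _ ≤ code D η * (E * m) := Nat.mul_le_mul_right _ hcode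
          _ ≤ _ := Nat.le_add_right _ _
      exact absurd hrlt (not_lt.mpr (le_of_lt hrp))
    rw [mem_USupp, mem_USupp, hceq]

end AuxDecrease

section AuxNF

variable {n : ℕ} {κ : Type*} [Fintype κ] [DecidableEq κ]
variable {A : Type*} [CommRing A]
variable {d : κ → ℤ} {J : κ → Set (Exp n)} {P : κ → Finset (Exp n)}
variable {gb : Exp n → κ → (κ → MvPolynomial (Fin (n+1)) A)}

/-- If an element has a term in `U`, it admits a reduction step. -/
lemma exists_red (hQS : ∀ k, IsMonomialIdeal (J k) ∧ IsPommaretBasis (P k) (J k))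
    {h : κ → MvPolynomial (Fin (n+1)) A} {l : κ} {γ : Exp n}
    (hc : coeff γ (h l) ≠ 0) (hγ : γ ∈ J l) : ∃ h', RedStep P gb h h' := by
  obtain ⟨hP, hm, hsum⟩ := alphaPart_spec (hQS l).2 hγ
  have hc' : (h l).coeff (deltaPart (P l) γ + alphaPart (P l) γ) ≠ 0 := by
    have hge : deltaPart (P l) γ + alphaPart (P l) γ = γ := by
      rw [add_comm]; exact hsum.symm
    rw [hge]; exact hc
  exact ⟨_, l, alphaPart (P l) γ, hP, deltaPart (P l) γ, hm, hc', rfl⟩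

/-- Existence of a normal form: every homogeneous element reduces to an element
supported in `N(U)`. -/
lemma nf_exists (hQS : ∀ k, IsMonomialIdeal (J k) ∧ IsPommaretBasis (P k) (J k))
    (hG : IsMarkedSetV d J P gb) {s : ℤ} :
    ∀ (N : ℕ) (h : κ → MvPolynomial (Fin (n+1)) A), nuF d J P s h ≤ N → IsHomogV d h s →
      ∃ w, Relation.ReflTransGen (RedStep P gb) h w ∧
        (∀ l γ, coeff γ (w l) ≠ 0 → γ ∉ J l) := by
  intro N
  induction N with
  | zero =>
    intro h hν hh
    by_cases hirr : ∀ l γ, coeff γ (h l) ≠ 0 → γ ∉ J l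
    · exact ⟨h, Relation.ReflTransGen.refl, hirr⟩
    · exfalso
      push_neg at hirr
      obtain ⟨l, γ, hc, hγ⟩ := hirr
      obtain ⟨h', hst⟩ := exists_red (gb := gb) hQS hc hγ
      have := nuF_lt hQS hG hh hst
      omega
  | succ N ih =>
    intro h hν hh
    by_cases hirr : ∀ l γ, coeff γ (h l) ≠ 0 → γ ∉ J l
    · exact ⟨h, Relation.ReflTransGen.refl, hirr⟩
    · push_neg at hirr
      obtain ⟨l, γ, hc, hγ⟩ := hirr
      obtain ⟨h', hst⟩ := exists_red (gb := gb) hQS hc hγ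
      have hlt := nuF_lt hQS hG hh hst
      obtain ⟨w, hrtg, hw⟩ := ih h' (by omega) (RedStep_homog hG hh hst)
      exact ⟨w, Relation.ReflTransGen.head hst hrtg, hw⟩

/-- Generators of the submodule of multiplicative multiples of the marked set. -/
def genSet (P : κ → Finset (Exp n)) (gb : Exp n → κ → (κ → MvPolynomial (Fin (n+1)) A)) :
    Set (κ → MvPolynomial (Fin (n+1)) A) :=
  {v | ∃ k, ∃ α ∈ P k, ∃ η, multExp α η ∧ v = (monomial η (1:A)) • gb α k}

lemma rtg_sub_mem {f u : κ → MvPolynomial (Fin (n+1)) A}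
    (hrtg : Relation.ReflTransGen (RedStep P gb) f u) :
    f - u ∈ Submodule.span A (genSet P gb) := by
  induction hrtg with
  | refl => simp
  | tail hab hbc ih =>
    rename_i b c
    obtain ⟨k, α, hα, η, hmul, hne, rfl⟩ := hbc
    have h1 : f - (b - (b k).coeff (η + α) • ((monomial η (1:A)) • gb α k))
        = (f - b) + (b k).coeff (η + α) • ((monomial η (1:A)) • gb α k) := by
      abel
    rw [h1]
    exact Submodule.add_mem _ ih
      (Submodule.smul_mem _ _ (Submodule.subset_span ⟨k, α, hα, η, hmul, rfl⟩))

/-- Uniqueness of normal forms: two elements supported in `N(U)` differing by an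
element of `⟨G⟩` coincide. -/
lemma nf_unique (hQS : ∀ k, IsMonomialIdeal (J k) ∧ IsPommaretBasis (P k) (J k))
    (hG : IsMarkedSetV d J P gb) {u v : κ → MvPolynomial (Fin (n+1)) A}
    (hu : ∀ l γ, coeff γ (u l) ≠ 0 → γ ∉ J l) (hv : ∀ l γ, coeff γ (v l) ≠ 0 → γ ∉ J l)
    (hmem : u - v ∈ Submodule.span A (genSet P gb)) : u = v := by
  classical
  obtain ⟨c, hcsub, hcsum⟩ := Submodule.mem_span_set.mp hmem
  -- choose a representation triple for each element of the support
  have hch : ∀ x ∈ c.support, ∃ q : Exp n × Exp n × κ, q.2.1 ∈ P q.2.2 ∧ multExp q.2.1 q.1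
      ∧ x = (monomial q.1 (1:A)) • gb q.2.1 q.2.2 := by
    intro x hx
    obtain ⟨k, α, hα, η, hmul, hval⟩ := hcsub hx
    exact ⟨(η, α, k), hα, hmul, hval⟩
  choose q hq1 hq2 hq3 using hch
  set F : Finset (Exp n × Exp n × κ) := c.support.attach.image (fun x => q x.1 x.2) with hF
  set cf : Exp n × Exp n × κ → A :=
    fun t => c ((monomial t.1 (1:A)) • gb t.2.1 t.2.2) with hcf
  set w := u - v with hw
  -- w as a combination over F
  have hwF : w = ∑ t ∈ F, cf t • ((monomial t.1 (1:A)) • gb t.2.1 t.2.2) := by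
    rw [hF]
    rw [Finset.sum_image (by
      intro x hx y hy hxy
      have : (x : κ → MvPolynomial (Fin (n+1)) A) = y := by
        rw [hq3 x.1 x.2, hq3 y.1 y.2, show q x.1 x.2 = q y.1 y.2 from hxy]
      exact Subtype.ext this)]
    have : ∀ x : {z // z ∈ c.support},
        cf (q x.1 x.2) • ((monomial (q x.1 x.2).1 (1:A)) • gb (q x.1 x.2).2.1 (q x.1 x.2).2.2)
          = c x.1 • x.1 := by
      intro x
      rw [hcf]
      simp only
      rw [← hq3 x.1 x.2]
    rw [Finset.sum_congr rfl fun x _ => this x]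
    rw [Finset.sum_attach c.support (fun z => c z • z)]
    rw [← hcsum]
    rfl
  -- coefficients over F are nonzero
  have hcfne : ∀ t ∈ F, cf t ≠ 0 := by
    intro t ht
    obtain ⟨x, -, rfl⟩ := Finset.mem_image.mp ht
    rw [hcf]
    simp only
    rw [← hq3 x.1 x.2]
    exact Finsupp.mem_support_iff.mp x.2
  -- w has no terms in U
  have hwU : ∀ l γ, γ ∈ J l → coeff γ (w l) = 0 := by
    intro l γ hγ
    have h1 : coeff γ (u l) = 0 := by
      by_contra hc1
      exact hu l γ hc1 hγ
    have h2 : coeff γ (v l) = 0 := by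
      by_contra hc2
      exact hv l γ hc2 hγ
    rw [hw]
    simp [h1, h2]
  -- show F must be empty
  rcases Finset.eq_empty_or_nonempty F with hFe | hFne
  · rw [hFe, Finset.sum_empty] at hwF
    have : u - v = 0 := hwF
    exact sub_eq_zero.mp this
  · exfalso
    set D := F.sup (fun t => degE t.1) with hD
    obtain ⟨q0, hq0F, hmax⟩ := Finset.exists_max_image F (fun t => code D t.1) hFne
    obtain ⟨η0, α0, k0⟩ := q0
    obtain ⟨x0, hx0, hx0e⟩ := Finset.mem_image.mp hq0F
    have hα0 : α0 ∈ P k0 := by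
      have := hq1 x0.1 x0.2
      rw [hx0e] at this
      exact this
    have hm0 : multExp α0 η0 := by
      have := hq2 x0.1 x0.2
      rw [hx0e] at this
      exact this
    set γ0 := η0 + α0 with hγ0
    have hγ0J : γ0 ∈ J k0 := by
      rw [hγ0, add_comm]
      exact basis_mem_cone (hQS k0).2 hα0 hm0
    have hη0b : ∀ i, η0 i ≤ D := by
      intro i
      calc η0 i ≤ degE η0 := coord_le_degE η0 i
        _ ≤ D := Finset.le_sup (f := fun t : Exp n × Exp n × κ => degE t.1) hq0F
    -- compute the coefficient of γ0 in w at component k0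
    have hterm : ∀ t ∈ F, coeff γ0 (((monomial t.1 (1:A)) • gb t.2.1 t.2.2) k0)
        = if t = (η0, α0, k0) then 1 else 0 := by
      intro t htF
      obtain ⟨ηt, αt, kt⟩ := t
      have hαt : αt ∈ P kt := by
        obtain ⟨x, hx, hxe⟩ := Finset.mem_image.mp htF
        have := hq1 x.1 x.2
        rw [hxe] at this
        exact this
      have hmt : multExp αt ηt := by
        obtain ⟨x, hx, hxe⟩ := Finset.mem_image.mp htF
        have := hq2 x.1 x.2
        rw [hxe] at this
        exact this
      rw [smul_apply_eq_mul]
      by_cases hteq : ((ηt, αt, kt) : Exp n × Exp n × κ) = (η0, α0, k0)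
      · simp only [Prod.mk.injEq] at hteq
        obtain ⟨rfl, rfl, rfl⟩ := hteq
        rw [if_pos rfl, hγ0, coeff_monomial_mul,
          gb_coeff_J hG hαt (basis_mem (hQS kt).2 hαt)]
        simp
      · rw [if_neg hteq]
        by_contra hne
        rw [coeff_monomial_mul'] at hne
        by_cases hle : ηt ≤ γ0
        · rw [if_pos hle, one_mul] at hne
          have hγsum : γ0 = ηt + (γ0 - ηt) := (add_tsub_cancel_of_le hle).symm
          rcases gb_coeff_cases hG hαt hne with ⟨hke, hbe⟩ | ⟨hβJ, -⟩
          · -- head case: decompositions coincide, contradiction with hteq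
            subst hke
            apply hteq
            have hdec : αt + ηt = α0 + η0 := by
              rw [add_comm αt ηt, ← hbe, ← hγsum, hγ0, add_comm]
            obtain ⟨hA, hE⟩ := decomp_unique (hQS k0).2 hαt hmt hα0 hm0 hdec
            rw [Prod.mk.injEq, Prod.mk.injEq]
            exact ⟨hE, hA, rfl⟩
          · -- tail case: lex-smaller offset, contradiction with maximality
            have hlex : lexLt η0 ηt :=
              keyLex (hQS k0).1 (hQS k0).2 hβJ hα0 hm0 (by rw [← hγsum, hγ0, add_comm])
            have hcode : code D η0 < code D ηt := code_lt_of_lexLt hη0b hlex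
            have := hmax (ηt, αt, kt) htF
            simp only at this
            omega
        · rw [if_neg hle] at hne
          exact absurd rfl hne
    -- the coefficient of γ0 in w k0 equals cf q0 ≠ 0, contradicting hwU
    have hcoeffw : coeff γ0 (w k0) = cf (η0, α0, k0) := by
      rw [hwF]
      rw [Finset.sum_apply]
      rw [coeff_sum]
      have : ∀ t ∈ F, coeff γ0 ((cf t • ((monomial t.1 (1:A)) • gb t.2.1 t.2.2)) k0)
          = if t = (η0, α0, k0) then cf t else 0 := by
        intro t htF
        rw [Pi.smul_apply, coeff_smul, hterm t htF]
        by_cases hq : t = (η0, α0, k0)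
        · rw [if_pos hq, if_pos hq]; simp
        · rw [if_neg hq, if_neg hq]; simp
      rw [Finset.sum_congr rfl this]
      rw [Finset.sum_ite_eq' F ((η0, α0, k0) : Exp n × Exp n × κ) cf]
      rw [if_pos hq0F]
    have := hwU k0 γ0 hγ0J
    rw [hcoeffw] at this
    exact hcfne _ hq0F this

end AuxNF

section AuxSpan

variable {n : ℕ} {κ : Type*} [Fintype κ] [DecidableEq κ]
variable {A : Type*} [CommRing A]
variable {d : κ → ℤ} {J : κ → Set (Exp n)} {P : κ → Finset (Exp n)}
variable {gb : Exp n → κ → (κ → MvPolynomial (Fin (n+1)) A)}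

lemma span_of_supp {w : κ → MvPolynomial (Fin (n+1)) A}
    (hw : ∀ l γ, coeff γ (w l) ≠ 0 → γ ∉ J l) :
    w ∈ Submodule.span A (NUTerms A J) := by
  classical
  have hrep : w = ∑ k : κ, Pi.single k (w k) := (Finset.univ_sum_single w).symm
  rw [hrep]
  apply Submodule.sum_mem
  intro k _
  have hk : (Pi.single k (w k) : κ → MvPolynomial (Fin (n+1)) A)
      = ∑ γ ∈ (w k).support, (coeff γ (w k)) • termV A γ k := by
    have h1 : (Pi.single k (w k) : κ → MvPolynomial (Fin (n+1)) A)
        = LinearMap.single A (fun _ : κ => MvPolynomial (Fin (n+1)) A) k (w k) := rfl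
    rw [h1]
    conv_lhs => rw [(w k).as_sum]
    rw [map_sum]
    apply Finset.sum_congr rfl
    intro γ hγ
    have h2 : (monomial γ) (coeff γ (w k)) = (coeff γ (w k)) • (monomial γ (1:A)) := by
      rw [smul_monomial, smul_eq_mul, mul_one]
    rw [h2, map_smul]
    rfl
  rw [hk]
  apply Submodule.sum_mem
  intro γ hγ
  apply Submodule.smul_mem
  apply Submodule.subset_span
  exact ⟨k, γ, hw k γ (mem_support_iff.mp hγ), rfl⟩

lemma supp_of_span {w : κ → MvPolynomial (Fin (n+1)) A}
    (hmem : w ∈ Submodule.span A (NUTerms A J)) :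
    ∀ l γ, coeff γ (w l) ≠ 0 → γ ∉ J l := by
  induction hmem using Submodule.span_induction with
  | mem x hx =>
    obtain ⟨k, α, hα, rfl⟩ := hx
    intro l γ hc
    rw [termV_apply] at hc
    by_cases hlk : l = k
    · rw [if_pos hlk, coeff_monomial] at hc
      have : α = γ := by
        by_contra hne
        rw [if_neg hne] at hc
        exact hc rfl
      rw [← this, hlk]
      exact hα
    · rw [if_neg hlk] at hc
      simp at hc
  | zero => intro l γ hc; simp at hc
  | add x y hx hy ihx ihy =>
    intro l γ hc hγJ
    have h1 : coeff γ (x l) = 0 := not_ne_iff.mp (fun h => ihx l γ h hγJ)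
    have h2 : coeff γ (y l) = 0 := not_ne_iff.mp (fun h => ihy l γ h hγJ)
    apply hc
    rw [Pi.add_apply, coeff_add, h1, h2, add_zero]
  | smul a x hx ihx =>
    intro l γ hc hγJ
    have h1 : coeff γ (x l) = 0 := not_ne_iff.mp (fun h => ihx l γ h hγJ)
    apply hc
    rw [Pi.smul_apply, coeff_smul, h1, smul_zero]

lemma rtg_homog (hG : IsMarkedSetV d J P gb) {s : ℤ} {f u : κ → MvPolynomial (Fin (n+1)) A}
    (hf : IsHomogV d f s) (h : Relation.ReflTransGen (RedStep P gb) f u) : IsHomogV d u s := by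
  induction h with
  | refl => exact hf
  | tail hab hbc ih => exact RedStep_homog hG ih hbc

end AuxSpan
/-- Proposition `ConfNoeth`: the reduction relation `→_G` is Noetherian and
confluent; in particular every homogeneous element reduces to a unique element of `⟨N(U)⟩^A`. -/
theorem statement2 {n : ℕ} {κ : Type*} [Fintype κ] [DecidableEq κ] (hm : Nonempty κ)
    {A : Type*} [CommRing A] [IsNoetherianRing A]
    (d : κ → ℤ) (J : κ → Set (Exp n)) (P : κ → Finset (Exp n))
    (hQS : ∀ k, IsMonomialIdeal (J k) ∧ IsPommaretBasis (P k) (J k))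
    (gb : Exp n → κ → (κ → MvPolynomial (Fin (n+1)) A))
    (hG : IsMarkedSetV d J P gb) :
    (∀ (f : κ → MvPolynomial (Fin (n+1)) A) (s : ℤ), IsHomogV d f s →
      ¬ ∃ c : ℕ → (κ → MvPolynomial (Fin (n+1)) A),
        c 0 = f ∧ ∀ i, RedStep P gb (c i) (c (i+1))) ∧
    (∀ (f : κ → MvPolynomial (Fin (n+1)) A) (s : ℤ), IsHomogV d f s →
      ∀ u v, Relation.ReflTransGen (RedStep P gb) f u →
        Relation.ReflTransGen (RedStep P gb) f v →
        ∃ w, Relation.ReflTransGen (RedStep P gb) u w ∧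
          Relation.ReflTransGen (RedStep P gb) v w) ∧
    (∀ (f : κ → MvPolynomial (Fin (n+1)) A) (s : ℤ), IsHomogV d f s →
      ∃! w, Relation.ReflTransGen (RedStep P gb) f w ∧
        w ∈ Submodule.span A (NUTerms A J)) := by
  refine ⟨?_, ?_, ?_⟩
  · -- Noetherianity
    rintro f s hf ⟨c, hc0, hstep⟩
    have hhom : ∀ i, IsHomogV d (c i) s := by
      intro i
      induction i with
      | zero => rw [hc0]; exact hf
      | succ i ih => exact RedStep_homog hG ih (hstep i)
    have hdec : ∀ i, nuF d J P s (c (i+1)) < nuF d J P s (c i) :=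
      fun i => nuF_lt hQS hG (hhom i) (hstep i)
    have hsum : ∀ i, nuF d J P s (c i) + i ≤ nuF d J P s (c 0) := by
      intro i
      induction i with
      | zero => omega
      | succ i ih => have := hdec i; omega
    have := hsum (nuF d J P s (c 0) + 1)
    omega
  · -- confluence
    intro f s hf u v hu hv
    have hus : IsHomogV d u s := rtg_homog hG hf hu
    have hvs : IsHomogV d v s := rtg_homog hG hf hv
    obtain ⟨u', huu, hu'⟩ := nf_exists hQS hG (nuF d J P s u) u le_rfl hus
    obtain ⟨v', hvv, hv'⟩ := nf_exists hQS hG (nuF d J P s v) v le_rfl hvs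
    have huv : u' = v' := by
      apply nf_unique hQS hG hu' hv'
      have h1 := rtg_sub_mem (hu.trans huu)
      have h2 := rtg_sub_mem (hv.trans hvv)
      have h3 : u' - v' = (f - v') - (f - u') := by abel
      rw [h3]
      exact Submodule.sub_mem _ h2 h1
    exact ⟨u', huu, huv ▸ hvv⟩
  · -- unique normal form in ⟨N(U)⟩
    intro f s hf
    obtain ⟨w, hfw, hw⟩ := nf_exists hQS hG (nuF d J P s f) f le_rfl hf
    refine ⟨w, ⟨hfw, span_of_supp hw⟩, ?_⟩
    rintro w' ⟨hfw', hw'mem⟩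
    have hw' := supp_of_span hw'mem
    apply nf_unique hQS hG hw' hw
    have h1 := rtg_sub_mem hfw
    have h2 := rtg_sub_mem hfw'
    have h3 : w' - w = (f - w) - (f - w') := by abel
    rw [h3]
    exact Submodule.sub_mem _ h1 h2

end MB
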